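/- arXiv:1604.08502 — 2 statements merged into one kernel-verified Lean document; each statement's English description precedes it below -/
import Mathlib

section
/- The sum of two q-holonomic functions is q-holonomic: if f, g : Z^r -> V generate q-holonomic cyclic modules over the quantum Weyl algebra W_r, then so does f + g. -/
noncomputable section

/-- The variable `q` in the field `ℚ(q)` of rational functions. -/
def q : RatFunc ℚ := RatFunc.X

/-- The quantum integer `[k] = (q^k - q^{-k})/(q - q⁻¹)` for `k : ℤ`. -/
def qint (k : ℤ) : RatFunc ℚ := (q ^ k - q ^ (-k)) / (q - q⁻¹)

/-- The quantum factorial `[s]! = ∏_{k=1}^s [k]`. -/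
def qfact (s : ℕ) : RatFunc ℚ := ∏ k ∈ Finset.range s, qint ((k : ℤ) + 1)

/-- The quantum binomial `[r choose s] = (∏_{k=r-s+1}^r [k]) / [s]!` for `r s : ℤ`,
with the convention that it is `0` for `s < 0`. -/
def qbinom (r s : ℤ) : RatFunc ℚ :=
  if s < 0 then 0
  else (∏ j ∈ Finset.range s.toNat, qint (r - (j : ℤ))) / qfact s.toNat

/-- `f : ℕ → ℚ(q)` is `q`-holonomic if it satisfies a nontrivial linear recurrence
`∑_{j=0}^d c_j(qⁿ, q) f(n+j) = 0` with `c_j ∈ ℚ[u,v]` and `c_d ≠ 0`. -/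
def IsQHolonomic (f : ℕ → RatFunc ℚ) : Prop :=
  ∃ d : ℕ, ∃ c : ℕ → MvPolynomial (Fin 2) ℚ, c d ≠ 0 ∧
    ∀ n : ℕ, ∑ j ∈ Finset.range (d + 1),
      (MvPolynomial.aeval ![q ^ n, q] (c j)) * f (n + j) = 0

set_option synthInstance.maxHeartbeats 1000000
set_option maxHeartbeats 4000000
set_option maxRecDepth 10000

namespace QHolAux

open Filter Polynomial

abbrev K : Type := RatFunc ℚ
abbrev S : Type := Filter.Germ (Filter.atTop : Filter ℕ) K
abbrev F : Type := RatFunc K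

lemma q_ne_zero : q ≠ 0 := by simpa [q] using RatFunc.X_ne_zero (K := ℚ)

lemma q_pow_injective : Function.Injective (fun n : ℕ => q ^ n) := by
  intro a b hab
  have h1 : (algebraMap (Polynomial ℚ) K) (X ^ a) = (algebraMap (Polynomial ℚ) K) (X ^ b) := by
    simpa [map_pow, RatFunc.algebraMap_X, q] using hab
  have h2 : (X : Polynomial ℚ) ^ a = X ^ b := IsFractionRing.injective (Polynomial ℚ) K h1
  simpa using congrArg natDegree h2

lemma eventually_eval_ne (p : Polynomial K) (hp : p ≠ 0) :
    ∀ᶠ n in (atTop : Filter ℕ), p.eval (q ^ n) ≠ 0 := by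
  have hfin : ((fun n : ℕ => q ^ n) ⁻¹' {x : K | p.IsRoot x}).Finite :=
    Set.Finite.preimage q_pow_injective.injOn (finite_setOf_isRoot hp)
  rw [← Nat.cofinite_eq_atTop]
  exact hfin.eventually_cofinite_notMem

/-- Evaluation of a polynomial along `n ↦ q^n`, as a germ. -/
def evalGerm : Polynomial K →+* S :=
  (Filter.Germ.coeRingHom _).comp (Pi.ringHom (fun n : ℕ => Polynomial.evalRingHom (q ^ n)))

lemma evalGerm_apply (p : Polynomial K) :
    evalGerm p = ((fun n : ℕ => p.eval (q ^ n) : ℕ → K) : S) := rfl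

lemma isUnit_evalGerm {p : Polynomial K} (hp : p ≠ 0) : IsUnit (evalGerm p) := by
  refine IsUnit.of_mul_eq_one (((fun n : ℕ => (p.eval (q ^ n))⁻¹) : ℕ → K) : S) ?_
  rw [evalGerm_apply, ← Filter.Germ.coe_mul,
    show (1 : S) = (((fun _ : ℕ => (1:K)) : ℕ → K) : S) from rfl, Filter.Germ.coe_eq]
  filter_upwards [eventually_eval_ne p hp] with n hn
  exact mul_inv_cancel₀ hn

def Φ : F →+* S :=
  IsLocalization.lift (M := nonZeroDivisors (Polynomial K))
    (fun y => isUnit_evalGerm (mem_nonZeroDivisors_iff_ne_zero.mp y.2))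

lemma Φ_algebraMap (p : Polynomial K) : Φ (algebraMap (Polynomial K) F p) = evalGerm p :=
  IsLocalization.lift_eq _ _

instance algFS : Algebra F S := Φ.toAlgebra

lemma smul_def' (a : F) (s : S) : a • s = Φ a * s := by
  rw [Algebra.smul_def, RingHom.algebraMap_toAlgebra]

lemma algebraMap_smul' (p : Polynomial K) (s : S) :
    (algebraMap (Polynomial K) F p) • s = evalGerm p * s := by
  rw [smul_def', Φ_algebraMap]

lemma germ_sum {ι : Type} (s : Finset ι) (G : ι → ℕ → K) :
    (((fun n => ∑ j ∈ s, G j n) : ℕ → K) : S) = ∑ j ∈ s, ((G j : ℕ → K) : S) := by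
  have h1 := map_sum (Filter.Germ.coeRingHom (atTop : Filter ℕ)) G s
  have h2 : (fun n => ∑ j ∈ s, G j n) = ∑ j ∈ s, G j := by funext n; simp
  rw [h2]; exact h1

lemma comp_ne_zero {p : Polynomial K} (hp : p ≠ 0) {a : K} (ha : a ≠ 0) :
    p.comp (C a * X) ≠ 0 := by
  intro h
  apply hp
  have h2 := congrArg (fun r => r.comp (C a⁻¹ * X)) h
  simp only [comp_assoc, zero_comp] at h2
  have h3 : ((C a * X : Polynomial K)).comp (C a⁻¹ * X) = X := by
    rw [mul_comp, C_comp, X_comp, ← mul_assoc, ← C_mul, mul_inv_cancel₀ ha]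
    simp
  rw [h3] at h2
  simpa using h2

/-- The germ of the `m`-shift of `h`. -/
def shiftGerm (h : ℕ → K) (m : ℕ) : S := (((fun n => h (n + m)) : ℕ → K) : S)

lemma germ_term (p : Polynomial K) (h : ℕ → K) (m : ℕ) :
    (((fun n => p.eval (q ^ n) * h (n + m)) : ℕ → K) : S) = evalGerm p * shiftGerm h m := by
  rw [evalGerm_apply, shiftGerm, ← Filter.Germ.coe_mul]; rfl

lemma germ_rec (h : ℕ → K) (d : ℕ) (C' : ℕ → Polynomial K)
    (hrec : ∀ n, ∑ j ∈ Finset.range (d+1), (C' j).eval (q^n) * h (n+j) = 0) (t : ℕ) :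
    ∑ j ∈ Finset.range (d+1),
      evalGerm ((C' j).comp (C (q^t) * X)) * shiftGerm h (t+j) = 0 := by
  have e1 : ∀ j, evalGerm ((C' j).comp (C (q^t) * X)) * shiftGerm h (t+j)
      = (((fun n => (C' j).eval (q^(n+t)) * h ((n+t)+j)) : ℕ → K) : S) := by
    intro j
    rw [evalGerm_apply, shiftGerm, ← Filter.Germ.coe_mul, Filter.Germ.coe_eq]
    refine Eventually.of_forall fun n => ?_
    simp only [Pi.mul_apply]
    rw [eval_comp, eval_mul, eval_C, eval_X]
    congr 2
    · rw [← pow_add]; ring_nf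
    · omega
  rw [Finset.sum_congr rfl (fun j _ => e1 j), ← germ_sum,
    show (0:S) = (((fun _ : ℕ => (0:K)) : ℕ → K) : S) from rfl, Filter.Germ.coe_eq]
  refine Eventually.of_forall fun n => ?_
  simpa using hrec (n+t)

lemma shift_mem_span (h : ℕ → K) (d : ℕ) (C' : ℕ → Polynomial K) (hCd : C' d ≠ 0)
    (hrec : ∀ n, ∑ j ∈ Finset.range (d+1), (C' j).eval (q^n) * h (n+j) = 0)
    (V : Submodule F S) (hV : ∀ k, k < d → shiftGerm h k ∈ V) :
    ∀ m, shiftGerm h m ∈ V := by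
  intro m
  induction m using Nat.strong_induction_on with
  | _ m ih =>
    rcases lt_or_ge m d with hm | hm
    · exact hV m hm
    · set t := m - d with ht
      have hmt : m = t + d := by omega
      have hid := germ_rec h d C' hrec t
      rw [Finset.sum_range_succ] at hid
      set Cc : ℕ → Polynomial K := fun j => (C' j).comp (C (q^t) * X) with hCc
      have hCcd : Cc d ≠ 0 := comp_ne_zero hCd (pow_ne_zero _ q_ne_zero)
      have hmem : (algebraMap (Polynomial K) F (Cc d)) • shiftGerm h m ∈ V := by
        have e : (algebraMap (Polynomial K) F (Cc d)) • shiftGerm h m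
            = ∑ j ∈ Finset.range d, (-(algebraMap (Polynomial K) F (Cc j))) • shiftGerm h (t+j) := by
          rw [algebraMap_smul', hmt, eq_neg_of_add_eq_zero_right hid, ← Finset.sum_neg_distrib]
          refine Finset.sum_congr rfl fun j hj => ?_
          rw [neg_smul, algebraMap_smul']
        rw [e]
        refine Submodule.sum_mem _ fun j hj => Submodule.smul_mem _ _ (ih (t+j) ?_)
        have := Finset.mem_range.mp hj
        omega
      have hne : (algebraMap (Polynomial K) F (Cc d)) ≠ 0 := by
        simpa [map_eq_zero_iff _ (IsFractionRing.injective (Polynomial K) F)] using hCcd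
      have e2 : shiftGerm h m
          = ((algebraMap (Polynomial K) F (Cc d))⁻¹) •
            ((algebraMap (Polynomial K) F (Cc d)) • shiftGerm h m) := by
        rw [smul_smul, inv_mul_cancel₀ hne, one_smul]
      rw [e2]
      exact Submodule.smul_mem _ _ hmem

/-- `ℚ[u,v] → K[u]`, `u ↦ X`, `v ↦ q`. -/
def ρ : MvPolynomial (Fin 2) ℚ →ₐ[ℚ] Polynomial K :=
  MvPolynomial.aeval ![Polynomial.X, Polynomial.C q]

lemma eval_ρ (c : MvPolynomial (Fin 2) ℚ) (n : ℕ) :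
    (ρ c).eval (q ^ n) = MvPolynomial.aeval ![q ^ n, q] c := by
  rw [ρ, MvPolynomial.aeval_def, MvPolynomial.aeval_def,
    ← Polynomial.coe_evalRingHom,
    MvPolynomial.eval₂_comp_left (Polynomial.evalRingHom (q ^ n))]
  congr 1
  · exact Subsingleton.elim _ _
  · funext i
    fin_cases i <;> simp

def τ : MvPolynomial (Fin 1) ℚ ≃ₐ[ℚ] Polynomial ℚ :=
  (MvPolynomial.renameEquiv ℚ (Equiv.equivPUnit.{1} (Fin 1))).trans (MvPolynomial.pUnitAlgEquiv.{0,0} ℚ)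

def σ' : MvPolynomial (Fin 1) ℚ →+* K :=
  (algebraMap (Polynomial ℚ) K).comp τ.toAlgHom.toRingHom

lemma σ'_injective : Function.Injective σ' :=
  (IsFractionRing.injective (Polynomial ℚ) K).comp τ.injective

lemma ρ_eq : (ρ.toRingHom : MvPolynomial (Fin 2) ℚ →+* Polynomial K)
    = (Polynomial.mapRingHom σ').comp (MvPolynomial.finSuccEquiv ℚ 1).toAlgHom.toRingHom := by
  apply MvPolynomial.ringHom_ext
  · intro r
    simp only [AlgHom.toRingHom_eq_coe, RingHom.coe_coe, AlgEquiv.toAlgHom_eq_coe,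
      RingHom.coe_comp, Function.comp_apply]
    rw [show (ρ (MvPolynomial.C r) : Polynomial K) = C ((r : ℚ) : K) by
      simp [ρ, Polynomial.algebraMap_apply]]
    simp only [MvPolynomial.finSuccEquiv_apply, MvPolynomial.eval₂Hom_C, coe_mapRingHom, map_C]
    simp [σ', τ, Polynomial.algebraMap_apply]
  · intro i
    simp only [AlgHom.toRingHom_eq_coe, RingHom.coe_coe, AlgEquiv.toAlgHom_eq_coe,
      RingHom.coe_comp, Function.comp_apply, AlgHom.coe_coe]
    refine Fin.cases ?_ (fun j => ?_) i
    · erw [MvPolynomial.finSuccEquiv_X_zero]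
      simp [ρ]
    · have hj : j = 0 := Subsingleton.elim _ _
      subst hj
      erw [MvPolynomial.finSuccEquiv_X_succ, coe_mapRingHom, map_C]
      have hτ : τ (MvPolynomial.X 0) = Polynomial.X := by
        rw [τ, AlgEquiv.trans_apply, MvPolynomial.renameEquiv_apply, MvPolynomial.rename_X]
        show MvPolynomial.eval₂ Polynomial.C (fun _ => Polynomial.X) _ = _
        rw [MvPolynomial.eval₂_X]
      have h2 : σ' (MvPolynomial.X 0) = q := by
        rw [σ', RingHom.comp_apply, AlgHom.toRingHom_eq_coe, RingHom.coe_coe,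
          AlgEquiv.toAlgHom_eq_coe]
        erw [hτ, RatFunc.algebraMap_X]
        rfl
      rw [h2]
      rw [show (Fin.succ 0 : Fin 2) = 1 from rfl]
      rw [show ρ (MvPolynomial.X 1) = Polynomial.C q by
        rw [ρ, MvPolynomial.aeval_X]; rfl]

lemma ρ_injective : Function.Injective ρ := by
  have h : Function.Injective
      ((Polynomial.mapRingHom σ').comp (MvPolynomial.finSuccEquiv ℚ 1).toAlgHom.toRingHom) :=
    (Polynomial.map_injective σ' σ'_injective).comp (MvPolynomial.finSuccEquiv ℚ 1).injective
  rw [show (⇑ρ : MvPolynomial (Fin 2) ℚ → Polynomial K) = ⇑ρ.toRingHom from rfl, ρ_eq]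
  exact h

/-- `ℚ[v] → ℚ[u,v]`, `v ↦ X 1`. -/
def innerQ : Polynomial ℚ →+* MvPolynomial (Fin 2) ℚ :=
  Polynomial.eval₂RingHom MvPolynomial.C (MvPolynomial.X 1)

/-- `ℚ[v][u] → ℚ[u,v]`, `u ↦ X 0`. -/
def L : Polynomial (Polynomial ℚ) →+* MvPolynomial (Fin 2) ℚ :=
  Polynomial.eval₂RingHom innerQ (MvPolynomial.X 0)

lemma aeval_comp_inner (n : ℕ) :
    ((MvPolynomial.aeval ![q ^ n, q] : MvPolynomial (Fin 2) ℚ →ₐ[ℚ] K) :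
      MvPolynomial (Fin 2) ℚ →+* K).comp innerQ = algebraMap (Polynomial ℚ) K := by
  apply Polynomial.ringHom_ext
  · intro a
    simp [innerQ, Polynomial.algebraMap_apply]
  · rw [RingHom.comp_apply, show innerQ X = MvPolynomial.X 1 by
      rw [innerQ, coe_eval₂RingHom, eval₂_X]]
    rw [RatFunc.algebraMap_X]
    simp [q]

lemma aeval_L (R : Polynomial (Polynomial ℚ)) (n : ℕ) :
    MvPolynomial.aeval ![q ^ n, q] (L R)
      = (R.map (algebraMap (Polynomial ℚ) K)).eval (q ^ n) := by
  rw [L, coe_eval₂RingHom]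
  rw [show (MvPolynomial.aeval ![q ^ n, q] (eval₂ innerQ (MvPolynomial.X 0) R) : K)
      = ((MvPolynomial.aeval ![q ^ n, q] : MvPolynomial (Fin 2) ℚ →ₐ[ℚ] K) :
        MvPolynomial (Fin 2) ℚ →+* K) (eval₂ innerQ (MvPolynomial.X 0) R) from rfl]
  rw [Polynomial.hom_eval₂, aeval_comp_inner]
  rw [show (((MvPolynomial.aeval ![q ^ n, q] : MvPolynomial (Fin 2) ℚ →ₐ[ℚ] K) :
        MvPolynomial (Fin 2) ℚ →+* K) (MvPolynomial.X 0)) = q ^ n by simp]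
  rw [eval_map]

lemma aeval_inner (p : Polynomial ℚ) (n : ℕ) :
    MvPolynomial.aeval ![q ^ n, q] (innerQ p) = algebraMap (Polynomial ℚ) K p := by
  have := congrArg (fun φ => φ p) (aeval_comp_inner n)
  simpa using this

end QHolAux

open QHolAux Filter Polynomial

/-- The sum of two `q`-holonomic functions is `q`-holonomic. -/
theorem isQHolonomic_add (f g : ℕ → RatFunc ℚ)
    (hf : IsQHolonomic f) (hg : IsQHolonomic g) :
    IsQHolonomic (f + g) := by
  classical
  obtain ⟨d, cf, hcfd, hrecf⟩ := hf
  obtain ⟨e, cg, hcge, hrecg⟩ := hg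
  -- recurrences with coefficients in `K[u]`
  set Cf : ℕ → Polynomial K := fun j => ρ (cf j) with hCf
  set Cg : ℕ → Polynomial K := fun j => ρ (cg j) with hCg
  have hCfd : Cf d ≠ 0 := fun H => hcfd (ρ_injective (H.trans (map_zero ρ).symm))
  have hCgd : Cg e ≠ 0 := fun H => hcge (ρ_injective (H.trans (map_zero ρ).symm))
  have hrecf' : ∀ n, ∑ j ∈ Finset.range (d+1), (Cf j).eval (q^n) * f (n+j) = 0 := by
    intro n
    simpa only [hCf, eval_ρ] using hrecf n
  have hrecg' : ∀ n, ∑ j ∈ Finset.range (e+1), (Cg j).eval (q^n) * g (n+j) = 0 := by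
    intro n
    simpa only [hCg, eval_ρ] using hrecg n
  -- the span of the basic shifts
  set v : (Fin d ⊕ Fin e) → S := Sum.elim (fun k => shiftGerm f k) (fun k => shiftGerm g k) with hv
  set V : Submodule F S := Submodule.span F (Set.range v) with hV
  have hVf : ∀ m, shiftGerm f m ∈ V :=
    shift_mem_span f d Cf hCfd hrecf' V
      (fun k hk => Submodule.subset_span ⟨Sum.inl ⟨k, hk⟩, rfl⟩)
  have hVg : ∀ m, shiftGerm g m ∈ V :=
    shift_mem_span g e Cg hCgd hrecg' V
      (fun k hk => Submodule.subset_span ⟨Sum.inr ⟨k, hk⟩, rfl⟩)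
  have hVh : ∀ m, shiftGerm (f+g) m ∈ V := by
    intro m
    have hsplit : shiftGerm (f+g) m = shiftGerm f m + shiftGerm g m := by
      rw [shiftGerm, shiftGerm, shiftGerm, ← Filter.Germ.coe_add]; rfl
    rw [hsplit]
    exact add_mem (hVf m) (hVg m)
  haveI : FiniteDimensional F V := FiniteDimensional.span_of_finite F (Set.finite_range v)
  have hfr : Module.finrank F V ≤ d + e := by
    have h1 := finrank_span_le_card (R := F) (Set.range v)
    rw [Set.toFinset_range] at h1
    calc Module.finrank F ↥V ≤ (Finset.univ.image v).card := h1
      _ ≤ (Finset.univ : Finset (Fin d ⊕ Fin e)).card := Finset.card_image_le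
      _ = d + e := by simp
  set D := d + e with hD
  set w : Fin (D+1) → V := fun j => ⟨shiftGerm (f+g) (j : ℕ), hVh j⟩ with hw
  have hwli : ¬ LinearIndependent F w := by
    intro hli
    have := hli.fintype_card_le_finrank
    rw [Fintype.card_fin] at this
    omega
  obtain ⟨b, hsum, i₀, hb₀⟩ := Fintype.not_linearIndependent_iff.mp hwli
  have hsum' : ∑ j : Fin (D+1), b j • shiftGerm (f+g) (j : ℕ) = 0 := by
    have h2 := congrArg (Subtype.val) hsum
    simpa [hw] using h2
  -- the top nonvanishing coefficient
  set Mset : Finset (Fin (D+1)) := Finset.univ.filter (fun j => b j ≠ 0) with hMset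
  have hMne : Mset.Nonempty := ⟨i₀, by simp [hMset, hb₀]⟩
  set Mx : Fin (D+1) := Mset.max' hMne with hMx
  set M : ℕ := (Mx : ℕ) with hM
  set b' : ℕ → F := fun j => if hj : j < D+1 then b ⟨j, hj⟩ else 0 with hb'
  have hb'M : b' M ≠ 0 := by
    have hmem : Mx ∈ Mset := Finset.max'_mem _ _
    rw [hMset, Finset.mem_filter] at hmem
    have : b' M = b Mx := by
      rw [hb']
      exact dif_pos (show M < D+1 from Mx.isLt)
    rw [this]
    exact hmem.2
  have hrel : ∑ j ∈ Finset.range (M+1), b' j • shiftGerm (f+g) j = 0 := by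
    have hsub : Finset.range (M+1) ⊆ Finset.range (D+1) :=
      Finset.range_subset_range.mpr (by have := Mx.isLt; omega)
    have hzero : ∀ j ∈ Finset.range (D+1), j ∉ Finset.range (M+1) →
        b' j • shiftGerm (f+g) j = 0 := by
      intro j hj hj'
      have hjD := Finset.mem_range.mp hj
      have hjM : M < j := by
        rw [Finset.mem_range] at hj'; omega
      have hbj : b ⟨j, hjD⟩ = 0 := by
        by_contra hne
        have hmem : (⟨j, hjD⟩ : Fin (D+1)) ∈ Mset := by simp [hMset, hne]
        have hle := Finset.le_max' Mset _ hmem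
        rw [← hMx] at hle
        have : j ≤ M := hle
        omega
      rw [hb']
      simp only [hjD, dif_pos, hbj, zero_smul]
    calc ∑ j ∈ Finset.range (M+1), b' j • shiftGerm (f+g) j
        = ∑ j ∈ Finset.range (D+1), b' j • shiftGerm (f+g) j :=
          Finset.sum_subset hsub hzero
      _ = ∑ j : Fin (D+1), b' (j : ℕ) • shiftGerm (f+g) (j : ℕ) :=
          (Fin.sum_univ_eq_sum_range (fun j => b' j • shiftGerm (f+g) j) (D+1)).symm
      _ = ∑ j : Fin (D+1), b j • shiftGerm (f+g) (j : ℕ) := by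
          refine Finset.sum_congr rfl fun j _ => ?_
          congr 1
          rw [hb']
          simp only [j.isLt, dif_pos]
      _ = 0 := hsum'
  -- clear denominators to `K[u]`
  obtain ⟨β, hβ⟩ := IsLocalization.exist_integer_multiples
    (nonZeroDivisors (Polynomial K)) (Finset.range (M+1)) b'
  have hchoice : ∀ j : ℕ, ∃ p : Polynomial K, j ∈ Finset.range (M+1) →
      algebraMap (Polynomial K) F p = ((β : Polynomial K)) • b' j := by
    intro j
    by_cases hj : j ∈ Finset.range (M+1)
    · obtain ⟨p, hp⟩ := hβ j hj
      exact ⟨p, fun _ => hp⟩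
    · exact ⟨0, fun h => absurd h hj⟩
  choose P hP using hchoice
  have hβne : (algebraMap (Polynomial K) F ((β : Polynomial K))) ≠ 0 := by
    have hβ0 : ((β : Polynomial K)) ≠ 0 := mem_nonZeroDivisors_iff_ne_zero.mp β.2
    simpa [map_eq_zero_iff _ (IsFractionRing.injective (Polynomial K) F)] using hβ0
  have hPM : P M ≠ 0 := by
    intro H
    have h1 := hP M (by simp)
    rw [H, map_zero, Algebra.smul_def] at h1
    exact (mul_ne_zero hβne hb'M) h1.symm
  have hrelP : ∑ j ∈ Finset.range (M+1), evalGerm (P j) * shiftGerm (f+g) j = 0 := by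
    have h1 : ∑ j ∈ Finset.range (M+1),
        (algebraMap (Polynomial K) F (P j)) • shiftGerm (f+g) j = 0 := by
      calc ∑ j ∈ Finset.range (M+1), (algebraMap (Polynomial K) F (P j)) • shiftGerm (f+g) j
          = ∑ j ∈ Finset.range (M+1),
            (algebraMap (Polynomial K) F ((β : Polynomial K))) • (b' j • shiftGerm (f+g) j) := by
            refine Finset.sum_congr rfl fun j hj => ?_
            rw [smul_smul, hP j hj, Algebra.smul_def]
            rw [smul_def']
            rw [show ((β : Polynomial K) • b' j : F)
                = algebraMap (Polynomial K) F (β : Polynomial K) * b' j from Algebra.smul_def _ _]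
            rfl
        _ = (algebraMap (Polynomial K) F ((β : Polynomial K))) •
            ∑ j ∈ Finset.range (M+1), b' j • shiftGerm (f+g) j := by
            rw [Finset.smul_sum]
        _ = 0 := by rw [hrel, smul_zero]
    have h2 := Finset.sum_congr rfl
      (fun j (_ : j ∈ Finset.range (M+1)) => algebraMap_smul' (P j) (shiftGerm (f+g) j))
    rw [← h2]
    exact h1
  -- eventual recurrence
  have hgerm : (((fun n => ∑ j ∈ Finset.range (M+1), (P j).eval (q^n) * (f+g) (n+j)) : ℕ → K) : S)
      = (((fun _ : ℕ => (0:K)) : ℕ → K) : S) := by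
    rw [germ_sum, Finset.sum_congr rfl (fun j _ => germ_term (P j) (f+g) j)]
    rw [hrelP]
    rfl
  have hev : ∀ᶠ n in (atTop : Filter ℕ),
      ∑ j ∈ Finset.range (M+1), (P j).eval (q^n) * (f+g) (n+j) = 0 :=
    Filter.Germ.coe_eq.mp hgerm
  obtain ⟨N, hN⟩ := Filter.eventually_atTop.mp hev
  -- recurrence valid for all n
  set Pf : ℕ → Polynomial K := fun j => P j * ∏ m ∈ Finset.range N, (X - C (q^m)) with hPfdef
  have hPfM : Pf M ≠ 0 :=
    mul_ne_zero hPM (Finset.prod_ne_zero_iff.mpr fun m _ => X_sub_C_ne_zero _)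
  have hrec2 : ∀ n, ∑ j ∈ Finset.range (M+1), (Pf j).eval (q^n) * (f+g) (n+j) = 0 := by
    intro n
    rcases lt_or_ge n N with hn | hn
    · refine Finset.sum_eq_zero fun j _ => ?_
      rw [hPfdef]
      simp only
      rw [eval_mul, eval_prod,
        Finset.prod_eq_zero (Finset.mem_range.mpr hn)
          (by rw [eval_sub, eval_X, eval_C, sub_self]),
        mul_zero, zero_mul]
    · have hterm : ∀ j, (Pf j).eval (q^n)
          = (P j).eval (q^n) * (∏ m ∈ Finset.range N, (q^n - q^m)) := by
        intro j
        rw [hPfdef]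
        simp only
        rw [eval_mul, eval_prod]
        congr 1
        exact Finset.prod_congr rfl fun m _ => by rw [eval_sub, eval_X, eval_C]
      calc ∑ j ∈ Finset.range (M+1), (Pf j).eval (q^n) * (f+g) (n+j)
          = (∏ m ∈ Finset.range N, (q^n - q^m)) *
            ∑ j ∈ Finset.range (M+1), (P j).eval (q^n) * (f+g) (n+j) := by
            rw [Finset.mul_sum]
            refine Finset.sum_congr rfl fun j _ => ?_
            rw [hterm j]; ring
        _ = 0 := by rw [hN n hn, mul_zero]
  -- descend to `ℚ[u,v]`
  set Q : ℕ → Polynomial (Polynomial ℚ) := fun j =>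
    IsLocalization.integerNormalization (nonZeroDivisors (Polynomial ℚ)) (Pf j) with hQdef
  have hmap : ∀ j, ∃ βj : nonZeroDivisors (Polynomial ℚ),
      (Q j).map (algebraMap (Polynomial ℚ) K) = (βj : Polynomial ℚ) • Pf j := fun j =>
    IsLocalization.integerNormalization_map_to_map _ _
  choose γ hγ using hmap
  set cfin : ℕ → MvPolynomial (Fin 2) ℚ := fun j =>
    L (Q j) * innerQ (∏ i ∈ (Finset.range (M+1)).erase j, (γ i : Polynomial ℚ)) with hcfin
  have heval : ∀ j ∈ Finset.range (M+1), ∀ n : ℕ,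
      MvPolynomial.aeval ![q^n, q] (cfin j)
        = algebraMap (Polynomial ℚ) K (∏ i ∈ Finset.range (M+1), (γ i : Polynomial ℚ))
          * (Pf j).eval (q^n) := by
    intro j hj n
    rw [hcfin]
    simp only
    rw [map_mul, aeval_L, aeval_inner, hγ j, eval_smul, Algebra.smul_def]
    rw [← Finset.mul_prod_erase (Finset.range (M+1)) (fun i => (γ i : Polynomial ℚ)) hj]
    rw [map_mul]
    ring
  have hprodne : algebraMap (Polynomial ℚ) K
      (∏ i ∈ Finset.range (M+1), (γ i : Polynomial ℚ)) ≠ 0 := by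
    have hne : (∏ i ∈ Finset.range (M+1), (γ i : Polynomial ℚ)) ≠ 0 :=
      Finset.prod_ne_zero_iff.mpr fun i _ => mem_nonZeroDivisors_iff_ne_zero.mp (γ i).2
    intro H
    exact hne ((map_eq_zero_iff _ (IsFractionRing.injective (Polynomial ℚ) K)).mp H)
  refine ⟨M, cfin, ?_, ?_⟩
  · intro H
    obtain ⟨n₀, hn₀⟩ := (eventually_eval_ne (Pf M) hPfM).exists
    have h1 := heval M (by simp) n₀
    rw [H, map_zero] at h1
    exact hn₀ ((mul_eq_zero.mp h1.symm).resolve_left hprodne)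
  · intro n
    calc ∑ j ∈ Finset.range (M+1), MvPolynomial.aeval ![q^n, q] (cfin j) * (f+g) (n+j)
        = ∑ j ∈ Finset.range (M+1),
          (algebraMap (Polynomial ℚ) K (∏ i ∈ Finset.range (M+1), (γ i : Polynomial ℚ))
            * (Pf j).eval (q^n)) * (f+g) (n+j) := by
          refine Finset.sum_congr rfl fun j hj => ?_
          rw [heval j hj n]
      _ = algebraMap (Polynomial ℚ) K (∏ i ∈ Finset.range (M+1), (γ i : Polynomial ℚ))
            * ∑ j ∈ Finset.range (M+1), (Pf j).eval (q^n) * (f+g) (n+j) := by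
          rw [Finset.mul_sum]
          refine Finset.sum_congr rfl fun j _ => ?_
          ring
      _ = 0 := by rw [hrec2 n, mul_zero]
end
end

section
/- If f : Z^r -> V is q-holonomic (satisfies, for each coordinate direction i, a nontrivial recurrence with coefficients Laurent polynomials in q and q^{n_1},...,q^{n_r}), and A in GL(r, Z), then the composite f ∘ A : Z^r -> V is q-holonomic in the same sense. -/
noncomputable section

/-- Evaluation of a Laurent polynomial in the `r+1` variables `v, u_1, …, u_r` with integer
coefficients (encoded as a finitely supported function on exponent vectors) at
`v = q`, `u_i = q^{n_i}`; the result is the Laurent polynomial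
`∑ a_e · q^{e_0 + ∑ e_i n_i}` in `ℤ[q,q⁻¹]`. -/
def evalCoef (r : ℕ) (c : (Fin (r + 1) → ℤ) →₀ ℤ) (n : Fin r → ℤ) : LaurentPolynomial ℤ :=
  Finsupp.sum c fun e a =>
    a • (LaurentPolynomial.T (e 0 + ∑ i : Fin r, e i.succ * n i) : LaurentPolynomial ℤ)

/-- Working definition: `f : ℤ^r → V` is `q`-holonomic if for each coordinate direction `i`
it satisfies a nontrivial recurrence whose coefficients are Laurent polynomials in
`q, q^{n_1}, …, q^{n_r}`. -/
def IsQHoloMV (r : ℕ) {V : Type*} [AddCommGroup V] [Module (LaurentPolynomial ℤ) V]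
    (f : (Fin r → ℤ) → V) : Prop :=
  ∀ i : Fin r, ∃ d : ℕ, ∃ c : ℕ → ((Fin (r + 1) → ℤ) →₀ ℤ), c d ≠ 0 ∧
    ∀ n : Fin r → ℤ, ∑ j ∈ Finset.range (d + 1),
      evalCoef r (c j) n • f (fun k => n k + if k = i then (j : ℤ) else 0) = 0

namespace QHoloAux

abbrev RR (r : ℕ) := AddMonoidAlgebra ℤ (Fin (r + 1) → ℤ)

variable (r : ℕ)

/-- the exponent additive hom `e ↦ e 0 + ∑ e_{i+1} n_i`. -/
def expHom (n : Fin r → ℤ) : (Fin (r + 1) → ℤ) →+ ℤ where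
  toFun e := e 0 + ∑ i : Fin r, e i.succ * n i
  map_zero' := by simp
  map_add' e e' := by
    simp [add_mul, Finset.sum_add_distrib]; ring

def evalHom (n : Fin r → ℤ) : RR r →+* LaurentPolynomial ℤ :=
  AddMonoidAlgebra.mapDomainRingHom ℤ (expHom r n)

lemma evalHom_apply (n : Fin r → ℤ) (c : RR r) :
    evalHom r n c = AddMonoidAlgebra.mapDomain (expHom r n) c := rfl

lemma evalCoef_eq (c : RR r) (n : Fin r → ℤ) :
    evalCoef r c.coeff n = evalHom r n c := by
  rw [evalHom_apply, AddMonoidAlgebra.mapDomain, Finsupp.mapDomain,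
    AddMonoidAlgebra.ofCoeff_finsuppSum, evalCoef]
  apply Finsupp.sum_congr
  intro e _
  rw [LaurentPolynomial.T]
  rw [AddMonoidAlgebra.smul_single']
  simp [expHom, AddMonoidAlgebra.ofCoeff_single]

lemma evalHom_mapDomain (ψ : (Fin (r + 1) → ℤ) → (Fin (r + 1) → ℤ)) (n m : Fin r → ℤ)
    (h : ∀ e, expHom r n (ψ e) = expHom r m e) (c : RR r) :
    evalHom r n (AddMonoidAlgebra.mapDomain ψ c) = evalHom r m c := by
  rw [evalHom_apply, evalHom_apply]
  simp only [AddMonoidAlgebra.mapDomain, AddMonoidAlgebra.coeff_ofCoeff]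
  rw [← Finsupp.mapDomain_comp]
  congr 2
  funext e
  exact h e

/-- coefficient substitution corresponding to shifting the base point by `u`. -/
def twist (u : Fin r → ℤ) (c : RR r) : RR r :=
  AddMonoidAlgebra.mapDomain (fun e : Fin (r + 1) → ℤ => Fin.cons (e 0 + ∑ i : Fin r, e i.succ * u i) (fun i => e i.succ)) c

lemma evalHom_twist (u n : Fin r → ℤ) (c : RR r) :
    evalHom r n (twist r u c) = evalHom r (fun k => n k + u k) c := by
  apply evalHom_mapDomain
  intro e
  simp [expHom, mul_add, Finset.sum_add_distrib]
  ring

lemma twist_ne_zero (u : Fin r → ℤ) {c : RR r} (hc : c ≠ 0) : twist r u c ≠ 0 := by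
  have hinj : Function.Injective
      (fun e : Fin (r+1) → ℤ => Fin.cons (e 0 + ∑ i : Fin r, e i.succ * u i) (fun i => e i.succ) :
        (Fin (r+1) → ℤ) → (Fin (r+1) → ℤ)) := by
    intro e e' h
    have htail : ∀ i : Fin r, e i.succ = e' i.succ := by
      intro i
      have := congrFun h i.succ
      simpa using this
    have hhead : e 0 = e' 0 := by
      have := congrFun h 0
      simp only [Fin.cons_zero] at this
      have hs : ∑ i : Fin r, e i.succ * u i = ∑ i : Fin r, e' i.succ * u i :=
        Finset.sum_congr rfl fun i _ => by rw [htail i]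
      omega
    funext j
    induction j using Fin.cases with
    | zero => exact hhead
    | succ i => exact htail i
  intro h0
  exact hc (AddMonoidAlgebra.mapDomain_injective hinj (by simpa [twist, AddMonoidAlgebra.mapDomain_zero] using h0))

variable {V : Type*} [AddCommGroup V] [Module (LaurentPolynomial ℤ) V]

/-- `f` satisfies a nontrivial `q`-recurrence in direction `w`. -/
def Rec (f : (Fin r → ℤ) → V) (w : Fin r → ℤ) : Prop :=
  ∃ D : ℕ, ∃ c : ℕ → RR r, c D ≠ 0 ∧ ∀ n : Fin r → ℤ,
    ∑ m ∈ Finset.range (D + 1), evalHom r n (c m) • f (fun k => n k + (m : ℤ) * w k) = 0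

lemma rec_congr {f : (Fin r → ℤ) → V} {w w' : Fin r → ℤ} (h : w = w') (hw : Rec r f w) :
    Rec r f w' := h ▸ hw

lemma rec_neg {f : (Fin r → ℤ) → V} {w : Fin r → ℤ} (hw : Rec r f w) :
    Rec r f (fun k => -w k) := by
  obtain ⟨D, c, hD, hrec⟩ := hw
  have hex : ∃ j, c j ≠ 0 := ⟨D, hD⟩
  classical
  let j0 := Nat.find hex
  have hj0 : j0 ≤ D := Nat.find_min' hex hD
  have hj0ne : c j0 ≠ 0 := Nat.find_spec hex
  have hlt : ∀ l < j0, c l = 0 := fun l hl => by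
    by_contra h; exact Nat.find_min hex hl h
  set u : Fin r → ℤ := fun k => -((D : ℤ) * w k) with hu
  refine ⟨D - j0, fun m => if m ≤ D - j0 then twist r u (c (D - m)) else 0, ?_, ?_⟩
  · simp only [le_refl, if_pos]
    have : D - (D - j0) = j0 := by omega
    rw [this]
    exact twist_ne_zero r _ hj0ne
  · intro n
    set p : Fin r → ℤ := fun k => n k + u k with hp
    have harg : ∀ m : ℕ, m ≤ D →
        (fun k => n k + (m : ℤ) * -w k) = (fun k => p k + ((D - m : ℕ) : ℤ) * w k) := by
      intro m hm
      funext k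
      have hc : ((D - m : ℕ) : ℤ) = (D : ℤ) - (m : ℤ) := by omega
      simp only [hp, hu, hc]
      ring
    have key : ∀ m ∈ Finset.range (D - j0 + 1),
        (evalHom r n (if m ≤ D - j0 then twist r u (c (D - m)) else 0) •
          f (fun k => n k + (m : ℤ) * -w k) : V)
        = evalHom r p (c (D - m)) • f (fun k => p k + ((D - m : ℕ) : ℤ) * w k) := by
      intro m hm
      simp only [Finset.mem_range] at hm
      rw [if_pos (by omega), evalHom_twist, harg m (by omega)]
    rw [Finset.sum_congr rfl key]
    rw [Finset.sum_subset (Finset.range_subset_range.mpr (show D - j0 + 1 ≤ D + 1 by omega))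
      (by
        intro m hm hnm
        simp only [Finset.mem_range] at hm hnm
        have : c (D - m) = 0 := hlt _ (by omega)
        rw [this]
        simp)]
    have hrefl : ∑ x ∈ Finset.range (D + 1), evalHom r p (c (D - x)) •
        f (fun k => p k + ((D - x : ℕ) : ℤ) * w k)
        = ∑ m ∈ Finset.range (D + 1), evalHom r p (c m) •
          f (fun k => p k + (m : ℤ) * w k) := by
      rw [← Finset.sum_range_reflect (fun m => evalHom r p (c m) •
        f (fun k => p k + (m : ℤ) * w k)) (D + 1)]
      apply Finset.sum_congr rfl
      intro m hm
      simp only [Nat.add_sub_cancel]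
    rw [hrefl]
    exact hrec p


/-- shifted argument -/
def sh (v : Fin r → Fin r → ℤ) (α : Fin r → ℕ) (n : Fin r → ℤ) : Fin r → ℤ :=
  fun k => n k + ∑ i : Fin r, (α i : ℤ) * v i k

lemma sh_add (v : Fin r → Fin r → ℤ) (α : Fin r → ℕ) (i : Fin r) (l : ℕ) (n : Fin r → ℤ) :
    (fun k => sh r v α n k + (l : ℤ) * v i k) = sh r v (Function.update α i (α i + l)) n := by
  funext k
  simp only [sh]
  have h1 : ∀ β : Fin r → ℕ, ∑ j : Fin r, (β j : ℤ) * v j k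
      = (β i : ℤ) * v i k + ∑ j ∈ Finset.univ.erase i, (β j : ℤ) * v j k :=
    fun β => (Finset.add_sum_erase _ _ (Finset.mem_univ i)).symm
  rw [h1 α, h1 (Function.update α i (α i + l))]
  have h2 : ∑ j ∈ Finset.univ.erase i, ((Function.update α i (α i + l) j : ℕ) : ℤ) * v j k
      = ∑ j ∈ Finset.univ.erase i, (α j : ℤ) * v j k := by
    apply Finset.sum_congr rfl
    intro j hj
    rw [Function.update_of_ne (Finset.mem_erase.mp hj).1]
  rw [h2, Function.update_self]
  push_cast
  ring

lemma reduce {f : (Fin r → ℤ) → V} (v : Fin r → Fin r → ℤ) (D : Fin r → ℕ)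
    (c : Fin r → ℕ → RR r) (hc : ∀ i, c i (D i) ≠ 0)
    (hrec : ∀ i n, ∑ l ∈ Finset.range (D i + 1),
      evalHom r n (c i l) • f (fun k => n k + (l : ℤ) * v i k) = 0)
    (α : Fin r → ℕ) :
    ∃ s : RR r, s ≠ 0 ∧ ∃ ρ : (∀ i, Fin (D i)) → RR r, ∀ n,
      evalHom r n s • f (sh r v α n) =
        ∑ β : (∀ i, Fin (D i)), evalHom r n (ρ β) • f (sh r v (fun i => (β i : ℕ)) n) := by
  classical
  suffices h : ∀ N : ℕ, ∀ α : Fin r → ℕ, (∑ i, α i) < N →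
      ∃ s : RR r, s ≠ 0 ∧ ∃ ρ : (∀ i, Fin (D i)) → RR r, ∀ n,
      evalHom r n s • f (sh r v α n) =
        ∑ β : (∀ i, Fin (D i)), evalHom r n (ρ β) • f (sh r v (fun i => (β i : ℕ)) n) by
    exact h (∑ i, α i + 1) α (by omega)
  clear α
  intro N
  induction N with
  | zero => exact fun α h => absurd h (Nat.not_lt_zero _)
  | succ N IH =>
    intro α hα
    by_cases hcase : ∀ i, α i < D i
    · set β₀ : ∀ i, Fin (D i) := fun i => ⟨α i, hcase i⟩ with hβ₀
      refine ⟨1, one_ne_zero, fun β => if β = β₀ then 1 else 0, ?_⟩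
      intro n
      rw [map_one, one_smul]
      have hterm : ∀ β : ∀ i, Fin (D i),
          evalHom r n (if β = β₀ then (1 : RR r) else 0) • f (sh r v (fun i => (β i : ℕ)) n)
          = if β = β₀ then f (sh r v (fun i => (β i : ℕ)) n) else 0 := by
        intro β
        split <;> simp
      rw [Finset.sum_congr rfl fun β _ => hterm β,
        Finset.sum_ite_eq' Finset.univ β₀ (fun β => f (sh r v (fun i => (β i : ℕ)) n))]
      simp only [Finset.mem_univ, if_true]
      rfl
    · push_neg at hcase
      obtain ⟨i, hi⟩ := hcase
      have hi' : D i ≤ α i := hi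
      set α' : Fin r → ℕ := Function.update α i (α i - D i) with hα'
      have hsum : ∑ j, α j = α i + ∑ j ∈ Finset.univ \ {i}, α j := by
        rw [← Finset.erase_eq]
        exact (Finset.add_sum_erase _ _ (Finset.mem_univ i)).symm
      have hIH : ∀ l : Fin (D i), ∃ s : RR r, s ≠ 0 ∧ ∃ ρ : (∀ i, Fin (D i)) → RR r, ∀ n,
          evalHom r n s • f (sh r v (Function.update α i (α i - D i + (l : ℕ))) n) =
            ∑ β : (∀ i, Fin (D i)), evalHom r n (ρ β) •
              f (sh r v (fun i => (β i : ℕ)) n) := by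
        intro l
        apply IH
        rw [Finset.sum_update_of_mem (Finset.mem_univ i)]
        have := l.isLt
        omega
      choose S hS P hP using hIH
      set u : Fin r → ℤ := fun k => ∑ j, (α' j : ℤ) * v j k with hu
      set T : RR r := twist r u (c i (D i)) with hT
      refine ⟨T * ∏ l : Fin (D i), S l,
        mul_ne_zero (twist_ne_zero r u (hc i))
          (Finset.prod_ne_zero_iff.mpr fun l _ => hS l),
        fun β => - ∑ l : Fin (D i), twist r u (c i (l : ℕ)) *
          (∏ l' ∈ Finset.univ.erase l, S l') * P l β, ?_⟩
      intro n
      set Pi : RR r := ∏ l : Fin (D i), S l with hPi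
      have hshu : sh r v α' n = fun k => n k + u k := rfl
      have hev : ∀ x : RR r, evalHom r (sh r v α' n) x = evalHom r n (twist r u x) := by
        intro x
        rw [evalHom_twist, hshu]
      have harg : ∀ l : ℕ, (fun k => sh r v α' n k + (l : ℤ) * v i k)
          = sh r v (Function.update α i (α i - D i + l)) n := by
        intro l
        rw [sh_add]
        congr 1
        rw [hα', Function.update_idem, Function.update_self]
      have hbase := hrec i (sh r v α' n)
      rw [Finset.sum_congr rfl (fun l _ => by rw [hev, harg])] at hbase
      rw [Finset.sum_range_succ] at hbase
      have htop : Function.update α i (α i - D i + D i) = α := by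
        rw [Nat.sub_add_cancel hi', Function.update_eq_self]
      rw [htop] at hbase
      rw [← Fin.sum_univ_eq_sum_range] at hbase
      have key4 : evalHom r n T • f (sh r v α n)
          = - ∑ l : Fin (D i), evalHom r n (twist r u (c i (l : ℕ))) •
              f (sh r v (Function.update α i (α i - D i + (l : ℕ))) n) :=
        eq_neg_of_add_eq_zero_right hbase
      calc evalHom r n (T * Pi) • f (sh r v α n)
          = evalHom r n Pi • (evalHom r n T • f (sh r v α n)) := by
            rw [mul_comm, map_mul, mul_smul]
        _ = evalHom r n Pi • (- ∑ l : Fin (D i), evalHom r n (twist r u (c i (l : ℕ))) •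
              f (sh r v (Function.update α i (α i - D i + (l : ℕ))) n)) := by rw [key4]
        _ = - ∑ l : Fin (D i),
              evalHom r n (twist r u (c i (l : ℕ)) * ∏ l' ∈ Finset.univ.erase l, S l') •
              (evalHom r n (S l) • f (sh r v (Function.update α i (α i - D i + (l : ℕ))) n)) := by
            rw [smul_neg, Finset.smul_sum]
            congr 1
            apply Finset.sum_congr rfl
            intro l _
            rw [smul_smul, smul_smul, ← map_mul, ← map_mul]
            congr 2
            rw [hPi, ← Finset.mul_prod_erase Finset.univ S (Finset.mem_univ l)]
            ring
        _ = - ∑ l : Fin (D i), ∑ β : (∀ i, Fin (D i)),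
              evalHom r n (twist r u (c i (l : ℕ)) * (∏ l' ∈ Finset.univ.erase l, S l') * P l β) •
              f (sh r v (fun i => (β i : ℕ)) n) := by
            congr 1
            apply Finset.sum_congr rfl
            intro l _
            rw [hP l n, Finset.smul_sum]
            apply Finset.sum_congr rfl
            intro β _
            rw [smul_smul, ← map_mul]
        _ = ∑ β : (∀ i, Fin (D i)),
              evalHom r n (- ∑ l : Fin (D i), twist r u (c i (l : ℕ)) *
                (∏ l' ∈ Finset.univ.erase l, S l') * P l β) •
              f (sh r v (fun i => (β i : ℕ)) n) := by
            simp only [map_neg, map_sum, neg_smul, Finset.sum_smul, ← Finset.sum_neg_distrib]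
            rw [Finset.sum_comm]

lemma rec_of_all {f : (Fin r → ℤ) → V} (v : Fin r → Fin r → ℤ)
    (hv : ∀ i, Rec r f (v i)) (a : Fin r → ℕ) :
    Rec r f (fun k => ∑ i, (a i : ℤ) * v i k) := by
  classical
  choose D c hc hrec using hv
  set Nc := Fintype.card ((i : Fin r) → Fin (D i)) with hNc
  have hred := fun m : Fin (Nc + 1) => reduce r v D c hc hrec (fun i => (m : ℕ) * a i)
  choose S hS P hP using hred
  set z : Fin (Nc + 1) → (((i : Fin r) → Fin (D i)) → RR r) :=
    fun m β => (∏ m' ∈ Finset.univ.erase m, S m') * P m β with hz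
  obtain ⟨γ, hγ0, m₁, hm₁⟩ : ∃ γ : Fin (Nc + 1) → RR r,
      ∑ m, γ m • z m = 0 ∧ ∃ m, γ m ≠ 0 := by
    apply Fintype.not_linearIndependent_iff.mp
    intro hli
    have hle := LinearIndependent.fintype_card_le_finrank hli
    rw [Module.finrank_fintype_fun_eq_card] at hle
    simp [hNc] at hle
  set T : Finset (Fin (Nc + 1)) := Finset.univ.filter (fun m => γ m ≠ 0) with hTdef
  have hTne : T.Nonempty := ⟨m₁, by simp [hTdef, hm₁]⟩
  set Dm := T.max' hTne with hDm
  have hDmne : γ Dm ≠ 0 := (Finset.mem_filter.mp (T.max'_mem hTne)).2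
  have hDmax : ∀ m : Fin (Nc + 1), γ m ≠ 0 → m ≤ Dm :=
    fun m hm => Finset.le_max' T m (by simp [hTdef, hm])
  refine ⟨(Dm : ℕ),
    fun m => if h : m < Nc + 1 then γ ⟨m, h⟩ * ∏ m' : Fin (Nc + 1), S m' else 0, ?_, ?_⟩
  · show (if h : (Dm : ℕ) < Nc + 1 then γ ⟨(Dm : ℕ), h⟩ * ∏ m' : Fin (Nc + 1), S m'
      else 0) ≠ 0
    rw [dif_pos Dm.isLt]
    simp only [Fin.eta]
    exact mul_ne_zero hDmne (Finset.prod_ne_zero_iff.mpr fun m _ => hS m)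
  · intro n
    have harg : ∀ m : ℕ, (fun k => n k + (m : ℤ) * ∑ i, (a i : ℤ) * v i k)
        = sh r v (fun i => m * a i) n := by
      intro m
      funext k
      simp only [sh, Finset.mul_sum]
      congr 1
      apply Finset.sum_congr rfl
      intro i _
      push_cast
      ring
    calc ∑ m ∈ Finset.range ((Dm : ℕ) + 1),
          evalHom r n (if h : m < Nc + 1 then γ ⟨m, h⟩ * ∏ m' : Fin (Nc + 1), S m' else 0) •
            f (fun k => n k + (m : ℤ) * ∑ i, (a i : ℤ) * v i k)
        = ∑ m ∈ Finset.range (Nc + 1),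
          evalHom r n (if h : m < Nc + 1 then γ ⟨m, h⟩ * ∏ m' : Fin (Nc + 1), S m' else 0) •
            f (fun k => n k + (m : ℤ) * ∑ i, (a i : ℤ) * v i k) := by
          apply Finset.sum_subset (Finset.range_subset_range.mpr (by have := Dm.isLt; omega))
          intro m hm hnm
          simp only [Finset.mem_range] at hm hnm
          rw [dif_pos hm]
          have hγm : γ ⟨m, hm⟩ = 0 := by
            by_contra hne
            have := hDmax ⟨m, hm⟩ hne
            rw [Fin.le_def] at this
            simp at this
            omega
          rw [hγm, zero_mul, map_zero, zero_smul]
      _ = ∑ m : Fin (Nc + 1), evalHom r n (γ m * ∏ m' : Fin (Nc + 1), S m') •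
            f (sh r v (fun i => (m : ℕ) * a i) n) := by
          rw [← Fin.sum_univ_eq_sum_range (fun m =>
            evalHom r n (if h : m < Nc + 1 then γ ⟨m, h⟩ * ∏ m' : Fin (Nc + 1), S m' else 0) •
              f (fun k => n k + (m : ℤ) * ∑ i, (a i : ℤ) * v i k))]
          apply Finset.sum_congr rfl
          intro m _
          rw [dif_pos m.isLt]
          rw [harg (m : ℕ)]
      _ = ∑ m : Fin (Nc + 1), ∑ β : (i : Fin r) → Fin (D i),
            evalHom r n (γ m * z m β) • f (sh r v (fun i => (β i : ℕ)) n) := by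
          apply Finset.sum_congr rfl
          intro m _
          rw [map_mul, mul_smul]
          have hsplit : (∏ m' : Fin (Nc + 1), S m')
              = S m * ∏ m' ∈ Finset.univ.erase m, S m' :=
            (Finset.mul_prod_erase Finset.univ S (Finset.mem_univ m)).symm
          rw [hsplit, mul_comm (S m), map_mul, mul_smul, hP m n, Finset.smul_sum,
            Finset.smul_sum]
          apply Finset.sum_congr rfl
          intro β _
          rw [smul_smul, smul_smul, ← map_mul, ← map_mul]
          congr 2
          simp only [hz]
          ring
      _ = ∑ β : (i : Fin r) → Fin (D i),
            evalHom r n (∑ m : Fin (Nc + 1), γ m * z m β) •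
              f (sh r v (fun i => (β i : ℕ)) n) := by
          rw [Finset.sum_comm]
          apply Finset.sum_congr rfl
          intro β _
          rw [map_sum, Finset.sum_smul]
      _ = 0 := by
          apply Finset.sum_eq_zero
          intro β _
          have : ∑ m : Fin (Nc + 1), γ m * z m β = 0 := by
            have := congrFun hγ0 β
            simpa [Finset.sum_apply, smul_eq_mul] using this
          rw [this, map_zero, zero_smul]

lemma rec_all_directions {f : (Fin r → ℤ) → V} (hf : IsQHoloMV r f) (w : Fin r → ℤ) :
    Rec r f w := by
  classical
  have base : ∀ i, Rec r f (fun k => if k = i then 1 else 0) := by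
    intro i
    obtain ⟨d, c, hd, hr⟩ := hf i
    refine ⟨d, fun j => AddMonoidAlgebra.ofCoeff (c j), by simpa using hd, ?_⟩
    intro n
    have hcongr : ∀ j ∈ Finset.range (d + 1),
        evalHom r n (AddMonoidAlgebra.ofCoeff (c j)) • f (fun k => n k + (j : ℤ) * (if k = i then 1 else 0))
        = evalCoef r (c j) n • f (fun k => n k + if k = i then (j : ℤ) else 0) := by
      intro j _
      have hfa : (fun k => n k + (j : ℤ) * (if k = i then 1 else 0))
          = (fun k => n k + if k = i then (j : ℤ) else 0) := by
        funext k
        by_cases h : k = i <;> simp [h]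
      rw [hfa]; exact congrArg (· • f _) (evalCoef_eq r (AddMonoidAlgebra.ofCoeff (c j)) n).symm
    rw [Finset.sum_congr rfl hcongr]
    exact hr n
  have base' : ∀ i, Rec r f (fun k => if k = i then (-1 : ℤ) else 0) := by
    intro i
    apply rec_congr r ?_ (rec_neg r (base i))
    funext k
    by_cases h : k = i <;> simp [h]
  set v : Fin r → Fin r → ℤ :=
    fun i k => if k = i then (if 0 ≤ w i then 1 else -1) else 0 with hvdef
  have hv : ∀ i, Rec r f (v i) := by
    intro i
    by_cases h : 0 ≤ w i
    · apply rec_congr r ?_ (base i)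
      funext k
      simp [hvdef, h]
    · apply rec_congr r ?_ (base' i)
      funext k
      simp [hvdef, h]
  apply rec_congr r ?_ (rec_of_all r v hv (fun i => (w i).natAbs))
  funext k
  rw [Finset.sum_eq_single k]
  · by_cases h : 0 ≤ w k <;> simp only [hvdef, if_pos rfl, h, if_true, if_false, mul_one,
      mul_neg] <;> omega
  · intro i _ hik
    simp only [hvdef, if_neg (Ne.symm hik), mul_zero]
  · intro h
    exact absurd (Finset.mem_univ k) h

end QHoloAux

/-- Composition with an element of `GL(r, ℤ)` preserves `q`-holonomicity. -/
theorem isQHoloMV_comp_glZ (r : ℕ) {V : Type*} [AddCommGroup V]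
    [Module (LaurentPolynomial ℤ) V] (f : (Fin r → ℤ) → V) (hf : IsQHoloMV r f)
    (A : Matrix (Fin r) (Fin r) ℤ) (hA : IsUnit A.det) :
    IsQHoloMV r (fun n => f (A.mulVec n)) := by
  classical
  intro i
  obtain ⟨D, c, hD, hrec⟩ := QHoloAux.rec_all_directions r hf (fun k => A k i)
  set ψ : (Fin (r + 1) → ℤ) → (Fin (r + 1) → ℤ) :=
    fun e => Fin.cons (e 0) (fun l => ∑ k : Fin r, e k.succ * A k l) with hψ
  have hAunit : IsUnit A := (Matrix.isUnit_iff_isUnit_det A).mpr hA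
  obtain ⟨U, hU⟩ := hAunit
  have hψinj : Function.Injective ψ := by
    intro e e' h
    have h0 : e 0 = e' 0 := by
      have := congrFun h 0
      simpa [hψ] using this
    have htail : (fun k : Fin r => e k.succ) = (fun k => e' k.succ) := by
      have hv : Matrix.vecMul (fun k : Fin r => e k.succ) A
          = Matrix.vecMul (fun k : Fin r => e' k.succ) A := by
        funext l
        have := congrFun h l.succ
        simpa [hψ, Matrix.vecMul, dotProduct] using this
      have h2 := congrArg (fun x => Matrix.vecMul x ((↑U⁻¹ : Matrix (Fin r) (Fin r) ℤ))) hv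
      simpa [Matrix.vecMul_vecMul, ← hU, Units.mul_inv, Matrix.vecMul_one] using h2
    funext j
    induction j using Fin.cases with
    | zero => exact h0
    | succ k => exact congrFun htail k
  refine ⟨D, fun j => (AddMonoidAlgebra.mapDomain ψ (c j)).coeff, ?_, ?_⟩
  · intro h0
    exact hD (AddMonoidAlgebra.mapDomain_injective hψinj (by
      rw [AddMonoidAlgebra.mapDomain_zero]; exact AddMonoidAlgebra.coeff_injective h0))
  · intro n
    have harg : ∀ j : ℕ, (fun k => (A.mulVec n) k + (j : ℤ) * A k i)
        = A.mulVec (fun k => n k + if k = i then (j : ℤ) else 0) := by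
      intro j
      funext k
      simp only [Matrix.mulVec, dotProduct, mul_add, Finset.sum_add_distrib,
        mul_ite, mul_zero]
      rw [Finset.sum_ite_eq' Finset.univ i (fun l => A k l * (j : ℤ))]
      simp [mul_comm]
    have heval : ∀ j, evalCoef r (AddMonoidAlgebra.mapDomain ψ (c j)).coeff n
        = QHoloAux.evalHom r (A.mulVec n) (c j) := by
      intro j
      rw [QHoloAux.evalCoef_eq]
      apply QHoloAux.evalHom_mapDomain
      intro e
      simp only [QHoloAux.expHom, AddMonoidHom.coe_mk, ZeroHom.coe_mk, hψ, Fin.cons_zero,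
        Fin.cons_succ]
      congr 1
      simp only [Finset.sum_mul]
      rw [Finset.sum_comm]
      apply Finset.sum_congr rfl
      intro k _
      simp [Matrix.mulVec, dotProduct, Finset.mul_sum, mul_assoc]
    have hstep : ∀ j ∈ Finset.range (D + 1),
        evalCoef r (AddMonoidAlgebra.mapDomain ψ (c j)).coeff n •
          (fun n => f (A.mulVec n)) (fun k => n k + if k = i then (j : ℤ) else 0)
        = QHoloAux.evalHom r (A.mulVec n) (c j) •
          f (fun k => (A.mulVec n) k + (j : ℤ) * A k i) := by
      intro j _
      rw [heval j]
      congr 1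
      simp only []
      rw [harg j]
    rw [Finset.sum_congr rfl hstep]
    exact hrec (A.mulVec n)
end
end
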